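/- Modulation property of the Q-QPFT: for f ∈ L¹(ℝ²,ℍ) and w₀ = (u₀, v₀) ∈ ℝ², defining the modulated signal (M_{w₀}f)(x) = e^{i x₁ u₀} f(x) e^{j x₂ v₀}, one has Q^ℍ_{μ₁,μ₂}[M_{w₀}f](w) = e^{i[(c₁u₀² - 2b₁c₁u₀w₁ - b₁e₁u₀)/b₁²]} · Q^ℍ_{μ₁,μ₂}[f](w₁ - u₀/b₁, w₂ - v₀/b₂) · e^{j[(c₂v₀² - 2b₂c₂v₀w₂ - b₂e₂v₀)/b₂²]}. -/

import Mathlib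

open MeasureTheory Complex
open scoped ENNReal

noncomputable section

abbrev ℍ := Quaternion ℝ

/-- Embedding of ℂ into ℍ along the i-axis. -/
def Ci (z : ℂ) : ℍ := ⟨z.re, z.im, 0, 0⟩
/-- Embedding of ℂ into ℍ along the j-axis. -/
def Cj (z : ℂ) : ℍ := ⟨z.re, 0, z.im, 0⟩

/-- principal square root in ℂ -/
def csqrt (z : ℂ) : ℂ := z ^ (1/2 : ℂ)

/-- quaternion exponential e^{iθ} -/
def expi (θ : ℝ) : ℍ := Ci (Complex.exp (θ * Complex.I))
/-- quaternion exponential e^{jθ} -/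
def expj (θ : ℝ) : ℍ := Cj (Complex.exp (θ * Complex.I))

structure QP where
  a : ℝ
  b : ℝ
  c : ℝ
  d : ℝ
  e : ℝ

def phase (μ : QP) (x w : ℝ) : ℝ :=
  μ.a * x^2 + μ.b * x * w + μ.c * w^2 + μ.d * x + μ.e * w

/-- left quadratic-phase kernel Λ^i_{μ}(x,w) -/
def kerI (μ : QP) (x w : ℝ) : ℍ :=
  Ci (csqrt (μ.b * Complex.I / (2 * Real.pi))) * expi (-(phase μ x w))

/-- right quadratic-phase kernel Λ^j_{μ}(x,w) -/
def kerJ (μ : QP) (x w : ℝ) : ℍ :=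
  Cj (csqrt (μ.b * Complex.I / (2 * Real.pi))) * expj (-(phase μ x w))

/-- two-sided quaternion quadratic-phase Fourier transform -/
def QQPFT (μ₁ μ₂ : QP) (f : ℝ × ℝ → ℍ) (w : ℝ × ℝ) : ℍ :=
  ∫ x : ℝ × ℝ, kerI μ₁ x.1 w.1 * f x * kerJ μ₂ x.2 w.2

/-- two-sided quaternion Fourier transform -/
def QFT (f : ℝ × ℝ → ℍ) (w : ℝ × ℝ) : ℍ :=
  (1 / (2 * Real.pi)) • ∫ x : ℝ × ℝ, expi (-(x.1 * w.1)) * f x * expj (-(x.2 * w.2))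



/-! ### Auxiliary lemmas -/

lemma Ci_mul' (z w : ℂ) : Ci (z * w) = Ci z * Ci w := by
  ext <;> simp only [Quaternion.re_mul, Quaternion.imI_mul, Quaternion.imJ_mul, Quaternion.imK_mul] <;> simp [Ci, Complex.mul_re, Complex.mul_im]

lemma Cj_mul' (z w : ℂ) : Cj (z * w) = Cj z * Cj w := by
  ext <;> simp only [Quaternion.re_mul, Quaternion.imI_mul, Quaternion.imJ_mul, Quaternion.imK_mul] <;> simp [Cj, Complex.mul_re, Complex.mul_im]

lemma norm_Ci' (z : ℂ) : ‖Ci z‖ = ‖z‖ := by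
  have h := Quaternion.normSq_eq_norm_mul_self (Ci z)
  have h2 : Quaternion.normSq (Ci z) = Complex.normSq z := by
    rw [Quaternion.normSq_def']; simp [Ci, Complex.normSq_apply]; ring
  have h3 := Complex.sq_norm z
  nlinarith [norm_nonneg (Ci z), norm_nonneg z]

lemma norm_Cj' (z : ℂ) : ‖Cj z‖ = ‖z‖ := by
  have h := Quaternion.normSq_eq_norm_mul_self (Cj z)
  have h2 : Quaternion.normSq (Cj z) = Complex.normSq z := by
    rw [Quaternion.normSq_def']; simp [Cj, Complex.normSq_apply]; ring
  have h3 := Complex.sq_norm z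
  nlinarith [norm_nonneg (Cj z), norm_nonneg z]

def qI : ℍ := ⟨0,1,0,0⟩
def qJ : ℍ := ⟨0,0,1,0⟩

lemma continuous_Ci' : Continuous Ci := by
  have h : Ci = fun z : ℂ => ((z.re : ℝ) : ℍ) + z.im • qI := by
    funext z; ext <;> simp only [Quaternion.re_add, Quaternion.imI_add, Quaternion.imJ_add, Quaternion.imK_add, Quaternion.re_smul, Quaternion.imI_smul, Quaternion.imJ_smul, Quaternion.imK_smul] <;> simp [Ci, qI]
  rw [h]
  exact (Quaternion.continuous_coe.comp Complex.continuous_re).add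
    (Complex.continuous_im.smul continuous_const)

lemma continuous_Cj' : Continuous Cj := by
  have h : Cj = fun z : ℂ => ((z.re : ℝ) : ℍ) + z.im • qJ := by
    funext z; ext <;> simp only [Quaternion.re_add, Quaternion.imI_add, Quaternion.imJ_add, Quaternion.imK_add, Quaternion.re_smul, Quaternion.imI_smul, Quaternion.imJ_smul, Quaternion.imK_smul] <;> simp [Cj, qJ]
  rw [h]
  exact (Quaternion.continuous_coe.comp Complex.continuous_re).add
    (Complex.continuous_im.smul continuous_const)

lemma norm_expi' (t : ℝ) : ‖expi t‖ = 1 := by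
  rw [expi, norm_Ci', Complex.norm_exp_ofReal_mul_I]

lemma norm_expj' (t : ℝ) : ‖expj t‖ = 1 := by
  rw [expj, norm_Cj', Complex.norm_exp_ofReal_mul_I]

lemma kerI_mod (μ : QP) (hb : μ.b ≠ 0) (u₀ x w₁ : ℝ) :
    kerI μ x w₁ * expi (x * u₀)
      = expi ((μ.c * u₀^2 - 2 * μ.b * μ.c * u₀ * w₁ - μ.b * μ.e * u₀) / μ.b^2) *
          kerI μ x (w₁ - u₀ / μ.b) := by
  have hr : -(phase μ x w₁) + x * u₀
      = (μ.c * u₀^2 - 2 * μ.b * μ.c * u₀ * w₁ - μ.b * μ.e * u₀) / μ.b^2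
        + -(phase μ x (w₁ - u₀ / μ.b)) := by
    unfold phase; field_simp; ring
  unfold kerI expi
  rw [mul_assoc, ← Ci_mul', ← Ci_mul', ← Ci_mul', ← Ci_mul']
  congr 1
  rw [mul_assoc, ← Complex.exp_add, ← add_mul, ← Complex.ofReal_add, hr,
    Complex.ofReal_add, add_mul, Complex.exp_add]
  ring

lemma kerJ_mod (μ : QP) (hb : μ.b ≠ 0) (v₀ x w₂ : ℝ) :
    expj (x * v₀) * kerJ μ x w₂
      = kerJ μ x (w₂ - v₀ / μ.b) *
          expj ((μ.c * v₀^2 - 2 * μ.b * μ.c * v₀ * w₂ - μ.b * μ.e * v₀) / μ.b^2) := by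
  have hr : x * v₀ + -(phase μ x w₂)
      = -(phase μ x (w₂ - v₀ / μ.b))
        + (μ.c * v₀^2 - 2 * μ.b * μ.c * v₀ * w₂ - μ.b * μ.e * v₀) / μ.b^2 := by
    unfold phase; field_simp; ring
  unfold kerJ expj
  rw [← Cj_mul', ← Cj_mul', ← Cj_mul', ← Cj_mul']
  congr 1
  have key : Complex.exp (↑(x * v₀) * Complex.I) * Complex.exp (↑(-(phase μ x w₂)) * Complex.I)
      = Complex.exp (↑(-(phase μ x (w₂ - v₀ / μ.b))) * Complex.I) *
        Complex.exp ((((μ.c * v₀^2 - 2 * μ.b * μ.c * v₀ * w₂ - μ.b * μ.e * v₀) / μ.b^2 : ℝ) : ℂ) *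
          Complex.I) := by
    rw [← Complex.exp_add, ← Complex.exp_add, ← add_mul, ← add_mul, ← Complex.ofReal_add,
      ← Complex.ofReal_add, hr]
  calc Complex.exp (↑(x * v₀) * Complex.I) *
        (csqrt (↑μ.b * Complex.I / (2 * ↑Real.pi)) * Complex.exp (↑(-(phase μ x w₂)) * Complex.I))
      = csqrt (↑μ.b * Complex.I / (2 * ↑Real.pi)) *
        (Complex.exp (↑(x * v₀) * Complex.I) * Complex.exp (↑(-(phase μ x w₂)) * Complex.I)) := by
        ring
    _ = _ := by rw [key]; ring

lemma continuous_kerI (μ : QP) (w₁ : ℝ) : Continuous fun x : ℝ × ℝ => kerI μ x.1 w₁ := by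
  unfold kerI expi
  apply continuous_const.mul
  apply continuous_Ci'.comp
  apply Complex.continuous_exp.comp
  apply Continuous.mul _ continuous_const
  apply Complex.continuous_ofReal.comp
  unfold phase
  fun_prop

lemma continuous_kerJ (μ : QP) (w₂ : ℝ) : Continuous fun x : ℝ × ℝ => kerJ μ x.2 w₂ := by
  unfold kerJ expj
  apply continuous_const.mul
  apply continuous_Cj'.comp
  apply Complex.continuous_exp.comp
  apply Continuous.mul _ continuous_const
  apply Complex.continuous_ofReal.comp
  unfold phase
  fun_prop

lemma norm_kerI (μ : QP) (x w : ℝ) :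
    ‖kerI μ x w‖ = ‖Ci (csqrt (μ.b * Complex.I / (2 * Real.pi)))‖ := by
  rw [kerI, norm_mul, norm_expi', mul_one]

lemma norm_kerJ (μ : QP) (x w : ℝ) :
    ‖kerJ μ x w‖ = ‖Cj (csqrt (μ.b * Complex.I / (2 * Real.pi)))‖ := by
  rw [kerJ, norm_mul, norm_expj', mul_one]

lemma integrable_ker_mul (μ₁ μ₂ : QP) (f : ℝ × ℝ → ℍ) (hf : Integrable f) (w₁ w₂ : ℝ) :
    Integrable fun x : ℝ × ℝ => kerI μ₁ x.1 w₁ * f x * kerJ μ₂ x.2 w₂ := by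
  set c₁ := ‖Ci (csqrt (μ₁.b * Complex.I / (2 * Real.pi)))‖
  set c₂ := ‖Cj (csqrt (μ₂.b * Complex.I / (2 * Real.pi)))‖
  have hmeas : AEStronglyMeasurable (fun x : ℝ × ℝ => kerI μ₁ x.1 w₁ * f x * kerJ μ₂ x.2 w₂)
      volume :=
    (((continuous_kerI μ₁ w₁).aestronglyMeasurable.mul hf.1).mul
      (continuous_kerJ μ₂ w₂).aestronglyMeasurable)
  refine Integrable.mono' ((hf.norm.const_mul c₁).mul_const c₂) hmeas ?_
  filter_upwards with x
  rw [norm_mul, norm_mul, norm_kerI, norm_kerJ]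

lemma integral_quat_mul_left_right (a b : ℍ) (g : ℝ × ℝ → ℍ) (hg : Integrable g) :
    ∫ x : ℝ × ℝ, a * g x * b = a * (∫ x : ℝ × ℝ, g x) * b := by
  let L : ℍ →L[ℝ] ℍ :=
    (ContinuousLinearMap.mul ℝ ℍ a).comp ((ContinuousLinearMap.mul ℝ ℍ).flip b)
  have hL : ∀ y : ℍ, L y = a * y * b := by
    intro y; simp [L, mul_assoc]
  have := L.integral_comp_comm hg
  simp only [hL] at this
  exact this

/-- Modulation property of the two-sided Q-QPFT. -/
theorem qqpft_modulation (μ₁ μ₂ : QP) (hb₁ : μ₁.b ≠ 0) (hb₂ : μ₂.b ≠ 0)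
    (f : ℝ × ℝ → ℍ) (hf : Integrable f) (u₀ v₀ : ℝ) (w : ℝ × ℝ) :
    QQPFT μ₁ μ₂ (fun x => expi (x.1 * u₀) * f x * expj (x.2 * v₀)) w
      = expi ((μ₁.c * u₀^2 - 2 * μ₁.b * μ₁.c * u₀ * w.1 - μ₁.b * μ₁.e * u₀) / μ₁.b^2) *
          QQPFT μ₁ μ₂ f (w.1 - u₀ / μ₁.b, w.2 - v₀ / μ₂.b) *
          expj ((μ₂.c * v₀^2 - 2 * μ₂.b * μ₂.c * v₀ * w.2 - μ₂.b * μ₂.e * v₀) / μ₂.b^2) := by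
  set C₁ := (μ₁.c * u₀^2 - 2 * μ₁.b * μ₁.c * u₀ * w.1 - μ₁.b * μ₁.e * u₀) / μ₁.b^2 with hC₁
  set C₂ := (μ₂.c * v₀^2 - 2 * μ₂.b * μ₂.c * v₀ * w.2 - μ₂.b * μ₂.e * v₀) / μ₂.b^2 with hC₂
  set w₁' := w.1 - u₀ / μ₁.b with hw₁
  set w₂' := w.2 - v₀ / μ₂.b with hw₂
  have hpt : ∀ x : ℝ × ℝ,
      kerI μ₁ x.1 w.1 * (expi (x.1 * u₀) * f x * expj (x.2 * v₀)) * kerJ μ₂ x.2 w.2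
        = expi C₁ * (kerI μ₁ x.1 w₁' * f x * kerJ μ₂ x.2 w₂') * expj C₂ := by
    intro x
    calc kerI μ₁ x.1 w.1 * (expi (x.1 * u₀) * f x * expj (x.2 * v₀)) * kerJ μ₂ x.2 w.2
        = (kerI μ₁ x.1 w.1 * expi (x.1 * u₀)) * f x * (expj (x.2 * v₀) * kerJ μ₂ x.2 w.2) := by
          simp only [mul_assoc]
      _ = (expi C₁ * kerI μ₁ x.1 w₁') * f x * (kerJ μ₂ x.2 w₂' * expj C₂) := by
          rw [kerI_mod μ₁ hb₁, kerJ_mod μ₂ hb₂]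
      _ = expi C₁ * (kerI μ₁ x.1 w₁' * f x * kerJ μ₂ x.2 w₂') * expj C₂ := by
          simp only [mul_assoc]
  have hg : Integrable fun x : ℝ × ℝ => kerI μ₁ x.1 w₁' * f x * kerJ μ₂ x.2 w₂' :=
    integrable_ker_mul μ₁ μ₂ f hf w₁' w₂'
  calc QQPFT μ₁ μ₂ (fun x => expi (x.1 * u₀) * f x * expj (x.2 * v₀)) w
      = ∫ x : ℝ × ℝ, expi C₁ * (kerI μ₁ x.1 w₁' * f x * kerJ μ₂ x.2 w₂') * expj C₂ := by
        unfold QQPFT; congr 1; funext x; exact hpt x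
    _ = expi C₁ * (∫ x : ℝ × ℝ, kerI μ₁ x.1 w₁' * f x * kerJ μ₂ x.2 w₂') * expj C₂ :=
        integral_quat_mul_left_right _ _ _ hg
    _ = expi C₁ * QQPFT μ₁ μ₂ f (w₁', w₂') * expj C₂ := rfl
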